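/- Let G = ([n], E) be a bipartite graph and S_G ≤ M(m×n, F) its graphical matrix space, with m ≤ n. For each r ∈ [m], the maximum of |V_1| + |V_2| over V_1 ⊆ [m], V_2 ⊆ [n] such that the induced subgraph G[V_1 ∪ V_2] has matching number at most r equals the maximum of dim L + dim R over subspaces L ≤ F^m, R ≤ F^n such that every matrix in the induced subspace S_G[L, R] = { T_L B T_Rᵗ : B ∈ S_G } has rank at most r, where the rows of T_L span L and the rows of T_R span R. -/

import Mathlib

open Matrix

/-- The graphical matrix space of a bipartite graph with edge set `E ⊆ [m] × [n]`. -/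
def graphSpace (F : Type*) [Field F] {m n : ℕ} (E : Finset (Fin m × Fin n)) :
    Submodule F (Matrix (Fin m) (Fin n) F) :=
  Submodule.span F ((fun e => Matrix.single e.1 e.2 (1 : F)) '' (E : Set (Fin m × Fin n)))

/-- A set of edges is a matching if no two distinct edges share a vertex. -/
def IsMatching {m n : ℕ} (M : Finset (Fin m × Fin n)) : Prop :=
  ∀ e ∈ M, ∀ f ∈ M, e ≠ f → e.1 ≠ f.1 ∧ e.2 ≠ f.2

section aux

variable {F : Type*} [Field F]

/-- Extract linearly independent columns realizing the rank. -/
lemma exists_li_cols {p q k : ℕ} (A : Matrix (Fin p) (Fin q) F) (hk : A.rank = k) :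
    ∃ g : Fin k → Fin q, Function.Injective g ∧ LinearIndependent F (fun i => Aᵀ (g i)) := by
  classical
  obtain ⟨b, hbsub, hbspan, hbli⟩ := exists_linearIndependent F (Set.range Aᵀ)
  have hbfin : b.Finite := (Set.finite_range Aᵀ).subset hbsub
  haveI := hbfin.fintype
  have hcard : Fintype.card b = k := by
    have h1 : Module.finrank F (Submodule.span F b) = b.toFinset.card :=
      finrank_span_set_eq_card hbli
    rw [hbspan, show Set.range Aᵀ = Set.range A.col from rfl, ← Matrix.rank_eq_finrank_span_cols, hk] at h1
    rw [← Set.toFinset_card, ← h1]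
  let e : Fin k ≃ b := (Fintype.equivFinOfCardEq hcard).symm
  have hchoice : ∀ x : b, ∃ j, Aᵀ j = (x : Fin p → F) := fun x => hbsub x.2
  choose c hc using hchoice
  refine ⟨fun i => c (e i), ?_, ?_⟩
  · intro i j hij
    have h2 : Aᵀ (c (e i)) = Aᵀ (c (e j)) := congrArg Aᵀ hij
    rw [hc, hc] at h2
    exact e.injective (Subtype.ext h2)
  · have heq : (fun i => Aᵀ (c (e i))) = (fun x : b => (x : Fin p → F)) ∘ e := by
      funext i; simp [hc]
    rw [heq]
    exact hbli.comp e e.injective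

lemma rank_eq_of_li_cols {p k : ℕ} (A : Matrix (Fin p) (Fin k) F)
    (h : LinearIndependent F (fun i => Aᵀ i)) : A.rank = k := by
  rw [Matrix.rank_eq_finrank_span_cols]
  have := finrank_span_eq_card h
  exact this.trans (Fintype.card_fin k)

/-- The support of a matrix of rank `k` contains a "matching" of size `k`. -/
lemma exists_matching_of_rank {p q k : ℕ} (A : Matrix (Fin p) (Fin q) F) (hk : A.rank = k) :
    ∃ (f : Fin k → Fin p) (g : Fin k → Fin q),
      Function.Injective f ∧ Function.Injective g ∧ ∀ i, A (f i) (g i) ≠ 0 := by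
  classical
  obtain ⟨g, hg, hgli⟩ := exists_li_cols A hk
  have hA1rank : (A.submatrix id g).rank = k := by
    apply rank_eq_of_li_cols
    exact hgli
  have hA1t : (A.submatrix id g)ᵀ.rank = k := by
    rw [Matrix.rank_transpose]; exact hA1rank
  obtain ⟨f, hf, hfli⟩ := exists_li_cols _ hA1t
  have hrows : LinearIndependent F (fun i => (A.submatrix f g) i) := by
    exact hfli
  have hunit : IsUnit (A.submatrix f g) := Matrix.linearIndependent_rows_iff_isUnit.mp hrows
  have hdet : (A.submatrix f g).det ≠ 0 :=
    ((Matrix.isUnit_iff_isUnit_det _).mp hunit).ne_zero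
  have hperm : ∃ σ : Equiv.Perm (Fin k), ∀ i, (A.submatrix f g) (σ i) i ≠ 0 := by
    by_contra hcon
    push_neg at hcon
    apply hdet
    rw [Matrix.det_apply]
    refine Finset.sum_eq_zero fun σ _ => ?_
    obtain ⟨i, hi⟩ := hcon σ
    rw [show (∏ x : Fin k, A.submatrix f g (σ x) x) = 0 from
      Finset.prod_eq_zero (Finset.mem_univ i) hi, smul_zero]
  obtain ⟨σ, hσ⟩ := hperm
  exact ⟨f ∘ σ, g, hf.comp σ.injective, hg, fun i => hσ i⟩

/-- Matrices in the graphical matrix space are supported on the edges. -/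
lemma graphSpace_apply_eq_zero {m n : ℕ} {E : Finset (Fin m × Fin n)}
    {B : Matrix (Fin m) (Fin n) F} (hB : B ∈ graphSpace F E) {i : Fin m} {j : Fin n}
    (hij : (i, j) ∉ E) : B i j = 0 := by
  induction hB using Submodule.span_induction with
  | mem x hx =>
    obtain ⟨e, he, rfl⟩ := hx
    have hne : ¬(e.1 = i ∧ e.2 = j) := by
      rintro ⟨h1, h2⟩
      apply hij
      have he' : e ∈ E := he
      rwa [show ((i, j) : Fin m × Fin n) = e from by rw [← h1, ← h2]]
    simp [Matrix.single, hne]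
  | zero => simp
  | add x y _ _ hx hy => simp [Matrix.add_apply, hx, hy]
  | smul a x _ hx => simp [hx]

/-- A partial permutation matrix with `k` ones has rank at least `k`. -/
lemma card_le_rank_sum_stdBasis {s t k : ℕ} (u : Fin k → Fin s) (v : Fin k → Fin t)
    (hu : Function.Injective u) (hv : Function.Injective v) :
    k ≤ (∑ i, Matrix.single (u i) (v i) (1 : F)).rank := by
  classical
  set Z : Matrix (Fin s) (Fin t) F := ∑ i, Matrix.single (u i) (v i) (1 : F) with hZ
  have hcol : ∀ j, Z.mulVec (Pi.single (v j) 1) = Pi.single (u j) 1 := by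
    intro j
    have hZa : ∀ a, Z a (v j) = if a = u j then (1 : F) else 0 := by
      intro a
      rw [hZ, Matrix.sum_apply]
      rw [Finset.sum_eq_single j]
      · by_cases h : a = u j <;> simp [Matrix.single, h, eq_comm]
      · intro i _ hij
        have hvv : v i ≠ v j := fun h => hij (hv h)
        simp [Matrix.single, hvv]
      · simp
    rw [Matrix.mulVec_single]
    funext a
    change Z a (v j) * 1 = _
    rw [hZa, mul_one, Pi.single_apply]
  have hmem : ∀ j, Pi.single (u j) (1 : F) ∈ LinearMap.range Z.mulVecLin :=
    fun j => ⟨Pi.single (v j) (1 : F), hcol j⟩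
  have hli : LinearIndependent F (fun j : Fin k => (Pi.single (u j) (1 : F) : Fin s → F)) := by
    have := (Pi.basisFun F (Fin s)).linearIndependent.comp u hu
    convert this using 1
    funext j
    simp [Pi.basisFun_apply]
  have hspan : Submodule.span F
        (Set.range fun j : Fin k => (Pi.single (u j) (1 : F) : Fin s → F)) ≤
      LinearMap.range Z.mulVecLin :=
    Submodule.span_le.mpr (Set.range_subset_iff.mpr hmem)
  have hfin := Submodule.finrank_mono hspan
  rwa [finrank_span_eq_card hli, Fintype.card_fin] at hfin

/-- The row-selection matrix for a finset. -/
noncomputable def selMatrix (F : Type*) [Field F] {m : ℕ} (V : Finset (Fin m)) :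
    Matrix (Fin V.card) (Fin m) F :=
  (1 : Matrix (Fin m) (Fin m) F).submatrix (V.orderEmbOfFin rfl) id

lemma selMatrix_mul_transpose {m : ℕ} (V : Finset (Fin m)) :
    selMatrix F V * (selMatrix F V)ᵀ = 1 := by
  ext i j
  simp only [selMatrix, Matrix.mul_apply, Matrix.submatrix_apply, Matrix.transpose_apply,
    Matrix.one_apply, id_eq]
  rw [Finset.sum_eq_single (V.orderEmbOfFin rfl i)]
  · simp [(V.orderEmbOfFin rfl).injective.eq_iff, eq_comm]
  · intro b _ hb
    simp [Ne.symm hb]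
  · simp

lemma selMatrix_rank {m : ℕ} (V : Finset (Fin m)) : (selMatrix F V).rank = V.card := by
  apply le_antisymm
  · exact (selMatrix F V).rank_le_height
  · calc V.card = (1 : Matrix (Fin V.card) (Fin V.card) F).rank := by
          simp [Matrix.rank_one]
      _ = (selMatrix F V * (selMatrix F V)ᵀ).rank := by rw [selMatrix_mul_transpose]
      _ ≤ (selMatrix F V).rank := Matrix.rank_mul_le_left _ _

lemma selMatrix_mul_mul {m n : ℕ} (V : Finset (Fin m)) (W : Finset (Fin n))
    (B : Matrix (Fin m) (Fin n) F) :
    selMatrix F V * B * (selMatrix F W)ᵀ =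
      B.submatrix (V.orderEmbOfFin rfl) (W.orderEmbOfFin rfl) := by
  ext i j
  simp only [selMatrix, Matrix.mul_apply, Matrix.submatrix_apply, Matrix.transpose_apply,
    Matrix.one_apply, id_eq]
  rw [Finset.sum_eq_single (W.orderEmbOfFin rfl j)]
  · rw [Finset.sum_eq_single (V.orderEmbOfFin rfl i)] <;> simp +contextual [eq_comm]
  · intro b _ hb
    simp [Ne.symm hb]
  · simp

lemma mul_submatrix_cols {a b c d : ℕ} (X : Matrix (Fin a) (Fin b) F)
    (Y : Matrix (Fin b) (Fin c) F) (φ : Fin d → Fin c) :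
    (X * Y).submatrix id φ = X * (Y.submatrix id φ) := by
  ext i j
  simp [Matrix.mul_apply]

lemma mul_stdBasis_mul {s t m n : ℕ} (X : Matrix (Fin s) (Fin m) F)
    (Y : Matrix (Fin t) (Fin n) F) (a : Fin m) (b : Fin n) :
    X * Matrix.single a b (1 : F) * Yᵀ =
      Matrix.of fun x y => X x a * Y y b := by
  ext x y
  simp only [Matrix.mul_apply, Matrix.single, Matrix.of_apply, Matrix.transpose_apply]
  rw [Finset.sum_eq_single b]
  · rw [Finset.sum_eq_single a]
    · simp
    · intro c _ hc
      simp [Ne.symm hc]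
    · simp
  · intro c _ hc
    rw [Finset.sum_eq_zero, zero_mul]
    intro d _
    simp [Ne.symm hc]
  · simp

end aux

/-- The maximum order `|V₁| + |V₂|` of an induced subgraph of `G` with matching number
at most `r` equals the maximum order `dim L + dim R` over subspaces `L ≤ F^m`, `R ≤ F^n`
such that every matrix of the induced subspace `S_G[L,R] = { T_L B T_Rᵗ : B ∈ S_G }` has
rank at most `r`; here `T_L` (resp. `T_R`) is a matrix of full row rank whose rows form
a basis of `L` (resp. `R`). -/
theorem stmt_19 (F : Type*) [Field F] (m n : ℕ) (hmn : m ≤ n)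
    (E : Finset (Fin m × Fin n)) (r : ℕ) (hr1 : 1 ≤ r) (hrm : r ≤ m) :
    sSup {k : ℕ | ∃ (V₁ : Finset (Fin m)) (V₂ : Finset (Fin n)),
        (∀ M ⊆ E, (∀ e ∈ M, e.1 ∈ V₁ ∧ e.2 ∈ V₂) → IsMatching M → M.card ≤ r) ∧
        V₁.card + V₂.card = k} =
      sSup {d : ℕ | ∃ (s t : ℕ) (TL : Matrix (Fin s) (Fin m) F)
          (TR : Matrix (Fin t) (Fin n) F),
        TL.rank = s ∧ TR.rank = t ∧
        (∀ B ∈ graphSpace F E, (TL * B * TRᵀ).rank ≤ r) ∧ s + t = d} := by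
  classical
  congr 1
  ext d
  simp only [Set.mem_setOf_eq]
  constructor
  · -- combinatorial to algebraic
    rintro ⟨V₁, V₂, hcond, rfl⟩
    refine ⟨V₁.card, V₂.card, selMatrix F V₁, selMatrix F V₂, selMatrix_rank V₁,
      selMatrix_rank V₂, ?_, rfl⟩
    intro B hB
    rw [selMatrix_mul_mul]
    let f := V₁.orderEmbOfFin rfl
    let g := V₂.orderEmbOfFin rfl
    obtain ⟨a, b, ha, hb, hne⟩ := exists_matching_of_rank (B.submatrix f g) rfl
    let M : Finset (Fin m × Fin n) := Finset.image (fun i => (f (a i), g (b i))) Finset.univ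
    have hpairinj :
        Function.Injective (fun i : Fin (B.submatrix f g).rank => (f (a i), g (b i))) := by
      intro i j hij
      exact ha (f.injective (Prod.ext_iff.mp hij).1)
    have hMcard : M.card = (B.submatrix f g).rank := by
      rw [Finset.card_image_of_injective _ hpairinj, Finset.card_univ, Fintype.card_fin]
    have hle : M.card ≤ r := by
      apply hcond
      · intro e he
        obtain ⟨i, _, rfl⟩ := Finset.mem_image.mp he
        by_contra hnot
        exact hne i (graphSpace_apply_eq_zero hB hnot)
      · intro e he
        obtain ⟨i, _, rfl⟩ := Finset.mem_image.mp he
        exact ⟨V₁.orderEmbOfFin_mem rfl (a i), V₂.orderEmbOfFin_mem rfl (b i)⟩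
      · intro e he e' he' hee
        obtain ⟨i, _, rfl⟩ := Finset.mem_image.mp he
        obtain ⟨j, _, rfl⟩ := Finset.mem_image.mp he'
        have hijne : i ≠ j := fun h => hee (by rw [h])
        exact ⟨fun h => hijne (ha (f.injective h)), fun h => hijne (hb (g.injective h))⟩
    rw [hMcard] at hle
    exact hle
  · -- algebraic to combinatorial
    rintro ⟨s, t, TL, TR, hTLr, hTRr, hrk, rfl⟩
    obtain ⟨φ, hφ, hφli⟩ := exists_li_cols TL hTLr
    obtain ⟨ψ, hψ, hψli⟩ := exists_li_cols TR hTRr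
    have hPunit : IsUnit (TL.submatrix id φ) := Matrix.linearIndependent_cols_iff_isUnit.mp hφli
    have hQunit : IsUnit (TR.submatrix id ψ) := Matrix.linearIndependent_cols_iff_isUnit.mp hψli
    set P := TL.submatrix id φ with hP
    set Q := TR.submatrix id ψ with hQ
    set W := P⁻¹ * TL with hWdef
    set W' := Q⁻¹ * TR with hW'def
    have hWsub : W.submatrix id φ = 1 := by
      rw [hWdef, mul_submatrix_cols, ← hP, Matrix.nonsing_inv_mul P
        ((Matrix.isUnit_iff_isUnit_det P).mp hPunit)]
    have hW'sub : W'.submatrix id ψ = 1 := by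
      rw [hW'def, mul_submatrix_cols, ← hQ, Matrix.nonsing_inv_mul Q
        ((Matrix.isUnit_iff_isUnit_det Q).mp hQunit)]
    have hWap : ∀ (x : Fin s) (c : Fin s), W x (φ c) = if x = c then (1 : F) else 0 := by
      intro x c
      have := congrFun (congrFun hWsub x) c
      simpa [Matrix.one_apply] using this
    have hW'ap : ∀ (y : Fin t) (c : Fin t), W' y (ψ c) = if y = c then (1 : F) else 0 := by
      intro y c
      have := congrFun (congrFun hW'sub y) c
      simpa [Matrix.one_apply] using this
    refine ⟨Finset.image φ Finset.univ, Finset.image ψ Finset.univ, ?_, by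
      rw [Finset.card_image_of_injective _ hφ, Finset.card_image_of_injective _ hψ]
      simp⟩
    intro M hME hMV hMmatch
    set k := M.card with hk
    let w : Fin k → Fin m × Fin n := fun i => (M.equivFin.symm i : Fin m × Fin n)
    have hwmem : ∀ i, w i ∈ M := fun i => (M.equivFin.symm i).2
    have hwinj : Function.Injective w := fun i j h =>
      M.equivFin.symm.injective (Subtype.ext h)
    set u : Fin k → Fin m := fun i => (w i).1 with hu
    set v : Fin k → Fin n := fun i => (w i).2 with hv
    have huinj : Function.Injective u := by
      intro i j h
      by_contra hne
      exact (hMmatch (w i) (hwmem i) (w j) (hwmem j) (fun e => hne (hwinj e))).1 h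
    have hvinj : Function.Injective v := by
      intro i j h
      by_contra hne
      exact (hMmatch (w i) (hwmem i) (w j) (hwmem j) (fun e => hne (hwinj e))).2 h
    have humem : ∀ i, ∃ c, φ c = u i := by
      intro i
      obtain ⟨c, -, hc⟩ := Finset.mem_image.mp (hMV (w i) (hwmem i)).1
      exact ⟨c, hc⟩
    have hvmem : ∀ i, ∃ c, ψ c = v i := by
      intro i
      obtain ⟨c, -, hc⟩ := Finset.mem_image.mp (hMV (w i) (hwmem i)).2
      exact ⟨c, hc⟩
    choose u' hu' using humem
    choose v' hv' using hvmem
    have hu'inj : Function.Injective u' := by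
      intro i j h
      apply huinj
      rw [← hu' i, ← hu' j, h]
    have hv'inj : Function.Injective v' := by
      intro i j h
      apply hvinj
      rw [← hv' i, ← hv' j, h]
    set B : Matrix (Fin m) (Fin n) F := ∑ i, Matrix.single (u i) (v i) (1 : F) with hB
    have hBmem : B ∈ graphSpace F E := by
      apply Submodule.sum_mem
      intro i _
      exact Submodule.subset_span ⟨w i, hME (hwmem i), rfl⟩
    have hZeq : W * B * W'ᵀ = ∑ i, Matrix.single (u' i) (v' i) (1 : F) := by
      rw [hB, Matrix.mul_sum, Matrix.sum_mul]
      refine Finset.sum_congr rfl fun i _ => ?_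
      rw [mul_stdBasis_mul]
      ext x y
      rw [Matrix.of_apply, ← hu' i, ← hv' i, hWap, hW'ap]
      by_cases h1 : x = u' i <;> by_cases h2 : y = v' i <;>
        simp [Matrix.single, h1, h2, eq_comm]
    have h1 : k ≤ (W * B * W'ᵀ).rank := by
      rw [hZeq]
      exact card_le_rank_sum_stdBasis u' v' hu'inj hv'inj
    have h2 : (W * B * W'ᵀ).rank ≤ (TL * B * TRᵀ).rank := by
      have heq : W * B * W'ᵀ = P⁻¹ * ((TL * B * TRᵀ) * (Q⁻¹)ᵀ) := by
        rw [hWdef, hW'def]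
        simp only [Matrix.transpose_mul, Matrix.mul_assoc]
      rw [heq]
      exact le_trans (Matrix.rank_mul_le_right _ _) (Matrix.rank_mul_le_left _ _)
    exact le_trans h1 (le_trans h2 (hrk B hBmem))
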